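/- Let G be a finite simple graph on vertex set V, let n ≥ 3 be an odd integer, and let f : ZMod n → V be an injective map whose image C is an induced cycle of G, i.e., for all i, j in ZMod n, f(i) and f(j) are adjacent in G if and only if j = i + 1 or j = i - 1. Suppose that every vertex of C has degree at most 3 in G, and that there exist adjacent vertices x, y of G with x, y ∉ C such that x has a neighbor in C and y has a neighbor in C. Then every proper 3-coloring of the induced subgraph of G on V \ C extends to a proper 3-coloring of G. -/

import Mathlib

private lemma erase_nonempty_of_two_le {s : Finset (Fin 3)} (hs : 2 ≤ s.card) (t : Fin 3) :
    (s.erase t).Nonempty := by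
  obtain ⟨a, b, ha, hb, hab⟩ := Finset.one_lt_card_iff.mp (lt_of_lt_of_le one_lt_two hs)
  rcases eq_or_ne a t with rfl | h
  · exact ⟨b, Finset.mem_erase.mpr ⟨fun hb' => hab hb'.symm, hb⟩⟩
  · exact ⟨a, Finset.mem_erase.mpr ⟨h, ha⟩⟩

private lemma cycle_list_coloring (n : ℕ) (hn : 3 ≤ n) (L : ZMod n → Finset (Fin 3))
    (hL : ∀ i, 2 ≤ (L i).card) (i0 : ZMod n) (a : Fin 3)
    (ha : a ∈ L (i0 + 1)) (ha2 : 2 ≤ ((L i0).erase a).card) :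
    ∃ g : ZMod n → Fin 3, (∀ i, g i ∈ L i) ∧ ∀ i, g (i + 1) ≠ g i := by
  classical
  haveI : NeZero n := ⟨by omega⟩
  set T : ℕ → Finset (Fin 3) := fun m =>
    if m = n - 1 then (L i0).erase a else L (i0 + 1 + (m : ZMod n)) with hT
  have hTcard : ∀ m, 2 ≤ (T m).card := by
    intro m; simp only [hT]; split
    · exact ha2
    · exact hL _
  set pick : ℕ → Fin 3 → Fin 3 := fun m t =>
    if h : ((T m).erase t).Nonempty then h.choose else a with hpickdef
  have hpick : ∀ m t, pick m t ∈ (T m).erase t := by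
    intro m t
    have h := erase_nonempty_of_two_le (hTcard m) t
    simp only [hpickdef, dif_pos h]
    exact h.choose_spec
  set g0 : ℕ → Fin 3 := fun k => Nat.rec a (fun k gk => pick (k + 1) gk) k with hg0
  have hstep : ∀ k, g0 (k + 1) = pick (k + 1) (g0 k) := fun k => rfl
  have hne : ∀ k, g0 (k + 1) ≠ g0 k := by
    intro k
    have h := hpick (k + 1) (g0 k)
    rw [← hstep k] at h
    exact (Finset.mem_erase.mp h).1
  have hmemT : ∀ k, g0 (k + 1) ∈ T (k + 1) := by
    intro k
    have h := hpick (k + 1) (g0 k)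
    rw [← hstep k] at h
    exact (Finset.mem_erase.mp h).2
  have hcastn1 : ((n - 1 : ℕ) : ZMod n) = -1 := by
    have h : ((n - 1 : ℕ) : ZMod n) + 1 = ((n : ℕ) : ZMod n) := by
      rw [← Nat.cast_succ]; congr 1; omega
    rw [ZMod.natCast_self] at h
    linear_combination h
  have hgL : ∀ k : ℕ, g0 k ∈ L (i0 + 1 + (k : ZMod n)) := by
    intro k
    cases k with
    | zero => simpa using (show g0 0 ∈ L (i0 + 1) from ha)
    | succ k =>
      have h := hmemT k
      simp only [hT] at h
      split at h
      · rename_i hk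
        rw [hk] at h
        rw [hk, hcastn1, show i0 + 1 + -1 = i0 from by ring]
        exact Finset.mem_of_mem_erase h
      · exact h
  have hlast : g0 (n - 1) ≠ a := by
    obtain ⟨m, hm⟩ : ∃ m, n - 1 = m + 1 := ⟨n - 2, by omega⟩
    have h := hmemT m
    rw [← hm] at h
    simp only [hT, if_pos rfl] at h
    exact Finset.ne_of_mem_erase h
  refine ⟨fun i => g0 ((i - (i0 + 1)).val), ?_, ?_⟩
  · intro i
    have h := hgL ((i - (i0 + 1)).val)
    rwa [ZMod.natCast_val, ZMod.cast_id, show i0 + 1 + (i - (i0 + 1)) = i from by ring] at h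
  · intro i
    set m := (i - (i0 + 1)).val with hm
    have hmlt : m < n := ZMod.val_lt _
    have hiup : (i + 1) - (i0 + 1) = ((m + 1 : ℕ) : ZMod n) := by
      push_cast
      rw [hm, ZMod.natCast_val, ZMod.cast_id]
      ring
    show g0 ((i + 1 - (i0 + 1)).val) ≠ g0 ((i - (i0 + 1)).val)
    rw [← hm]
    by_cases hcase : m + 1 < n
    · have hv : ((i + 1) - (i0 + 1)).val = m + 1 := by
        rw [hiup, ZMod.val_cast_of_lt hcase]
      rw [hv]
      exact hne m
    · have hm1 : m = n - 1 := by omega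
      have hv : ((i + 1) - (i0 + 1)).val = 0 := by
        rw [hiup, show (m + 1 : ℕ) = n from by omega, ZMod.natCast_self, ZMod.val_zero]
      rw [hv, hm1]
      exact Ne.symm hlast

private lemma exists_good_pair (n : ℕ) (hn : 3 ≤ n) (L : ZMod n → Finset (Fin 3))
    (hL : ∀ i, 2 ≤ (L i).card) (t1 t2 : Fin 3) (i1 i2 : ZMod n)
    (ht : t1 ≠ t2) (h1 : t1 ∉ L i1) (h2 : t2 ∉ L i2) :
    ∃ (i0 : ZMod n) (a : Fin 3), a ∈ L (i0 + 1) ∧ 2 ≤ ((L i0).erase a).card := by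
  classical
  haveI : NeZero n := ⟨by omega⟩
  by_cases h3 : ∃ i, (L i).card = 3
  · obtain ⟨i, hi⟩ := h3
    have hLuniv : L i = Finset.univ := Finset.eq_univ_of_card _ (by simpa using hi)
    obtain ⟨a, haa⟩ : (L (i + 1)).Nonempty := Finset.card_pos.mp (by have := hL (i + 1); omega)
    refine ⟨i, a, haa, ?_⟩
    rw [hLuniv, Finset.card_erase_of_mem (Finset.mem_univ a)]
    simp
  · push_neg at h3
    have hcard2 : ∀ i, (L i).card = 2 := by
      intro i
      have h := Finset.card_le_univ (L i)
      have h' := hL i; have h'' := h3 i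
      simp only [Finset.card_univ, Fintype.card_fin] at h
      omega
    by_cases hsub : ∀ i, L (i + 1) ⊆ L i
    · have heq : ∀ i, L (i + 1) = L i := fun i =>
        Finset.eq_of_subset_of_card_le (hsub i) (by rw [hcard2, hcard2])
      have hconst : ∀ (i : ZMod n) (k : ℕ), L (i + k) = L i := by
        intro i k
        induction k with
        | zero => simp
        | succ k ih => rw [Nat.cast_succ, ← add_assoc, heq, ih]
      have h12 : L i1 = L i2 := by
        have h := hconst i2 ((i1 - i2).val)
        rwa [ZMod.natCast_val, ZMod.cast_id,
          show i2 + (i1 - i2) = i1 from by ring] at h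
      exfalso
      rw [h12] at h1
      have hm1 : t1 ∈ Finset.univ \ L i2 := by simp [h1]
      have hm2 : t2 ∈ Finset.univ \ L i2 := by simp [h2]
      have hcard : (Finset.univ \ L i2).card = 1 := by
        rw [Finset.card_sdiff_of_subset (Finset.subset_univ _), hcard2]
        simp
      obtain ⟨u, hu⟩ := Finset.card_eq_one.mp hcard
      rw [hu] at hm1 hm2
      simp only [Finset.mem_singleton] at hm1 hm2
      exact ht (hm1.trans hm2.symm)
    · push_neg at hsub
      obtain ⟨i, hi⟩ := hsub
      obtain ⟨a, haL, haN⟩ := Finset.not_subset.mp hi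
      refine ⟨i, a, haL, ?_⟩
      rw [Finset.erase_eq_of_notMem haN, hcard2]

/-- Reduction of Example 5.1, odd case: let `C` be an induced cycle of odd
length `n ≥ 3`, all of whose vertices have degree at most 3, and suppose there
are adjacent vertices `x, y` outside `C`, each with a neighbor in `C`.  Then
every proper 3-coloring of the graph induced on the complement of `C` extends
to a proper 3-coloring of the whole graph. -/
theorem extend_coloring_odd_cycle_degree_three {V : Type*} [Fintype V]
    (G : SimpleGraph V) [DecidableRel G.Adj]
    (n : ℕ) (hn : 3 ≤ n) (hodd : Odd n)
    (f : ZMod n → V) (hf : Function.Injective f)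
    (hcyc : ∀ i j : ZMod n, G.Adj (f i) (f j) ↔ j = i + 1 ∨ j = i - 1)
    (hdeg : ∀ i : ZMod n, G.degree (f i) ≤ 3)
    (x y : V) (hxy : G.Adj x y)
    (hx : x ∉ Set.range f) (hy : y ∉ Set.range f)
    (hxC : ∃ i : ZMod n, G.Adj x (f i)) (hyC : ∃ i : ZMod n, G.Adj y (f i))
    (c : ((Set.range f)ᶜ : Set V) → Fin 3)
    (hc : ∀ a b, (G.induce (Set.range f)ᶜ).Adj a b → c a ≠ c b) :
    ∃ c' : V → Fin 3, (∀ a b, G.Adj a b → c' a ≠ c' b) ∧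
      ∀ u : ((Set.range f)ᶜ : Set V), c' u = c u := by
  classical
  haveI : NeZero n := ⟨by omega⟩
  set badF : ZMod n → Finset (Fin 3) := fun i =>
    Finset.univ.filter (fun t => ∃ w : ((Set.range f)ᶜ : Set V), G.Adj (f i) w ∧ c w = t)
    with hbadF
  have hne2 : (2 : ZMod n) ≠ 0 := by
    intro h
    rw [show (2 : ZMod n) = ((2 : ℕ) : ZMod n) from by push_cast; ring] at h
    have hd := (ZMod.natCast_eq_zero_iff 2 n).mp h
    have := Nat.le_of_dvd (by norm_num) hd
    omega
  have hbadcard : ∀ i, (badF i).card ≤ 1 := by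
    intro i
    rw [Finset.card_le_one]
    intro t1 h1 t2 h2
    by_contra hnet
    simp only [hbadF, Finset.mem_filter, Finset.mem_univ, true_and] at h1 h2
    obtain ⟨w1, hw1a, hw1c⟩ := h1
    obtain ⟨w2, hw2a, hw2c⟩ := h2
    have hww : (w1 : V) ≠ (w2 : V) := by
      intro h
      exact hnet (by rw [← hw1c, ← hw2c]; congr 1; exact Subtype.ext h)
    have hw1r : (w1 : V) ∉ Set.range f := w1.prop
    have hw2r : (w2 : V) ∉ Set.range f := w2.prop
    have d12 : f (i + 1) ≠ f (i - 1) := by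
      intro h
      exact hne2 (by linear_combination hf h)
    have e1 : f (i + 1) ≠ (w1 : V) := fun h => hw1r ⟨i + 1, h⟩
    have e2 : f (i + 1) ≠ (w2 : V) := fun h => hw2r ⟨i + 1, h⟩
    have e3 : f (i - 1) ≠ (w1 : V) := fun h => hw1r ⟨i - 1, h⟩
    have e4 : f (i - 1) ≠ (w2 : V) := fun h => hw2r ⟨i - 1, h⟩
    have hsub : ({f (i + 1), f (i - 1), (w1 : V), (w2 : V)} : Finset V) ⊆
        G.neighborFinset (f i) := by
      intro v hv
      simp only [Finset.mem_insert, Finset.mem_singleton] at hv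
      rw [SimpleGraph.mem_neighborFinset]
      rcases hv with rfl | rfl | rfl | rfl
      · exact (hcyc i (i + 1)).mpr (Or.inl rfl)
      · exact (hcyc i (i - 1)).mpr (Or.inr rfl)
      · exact hw1a
      · exact hw2a
    have hc4 : ({f (i + 1), f (i - 1), (w1 : V), (w2 : V)} : Finset V).card = 4 := by
      rw [Finset.card_insert_of_notMem (by simp [d12, e1, e2]),
        Finset.card_insert_of_notMem (by simp [e3, e4]),
        Finset.card_insert_of_notMem (by simp [hww]),
        Finset.card_singleton]
    have hdeg4 : 4 ≤ G.degree (f i) := by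
      rw [← hc4]
      exact Finset.card_le_card hsub
    have := hdeg i
    omega
  set L : ZMod n → Finset (Fin 3) := fun i => Finset.univ \ badF i with hLdef
  have hLcard : ∀ i, 2 ≤ (L i).card := by
    intro i
    have h := hbadcard i
    have hc3 : (L i).card = 3 - (badF i).card := by
      simp only [hLdef]
      rw [Finset.card_sdiff_of_subset (Finset.subset_univ _), Finset.card_univ, Fintype.card_fin]
    omega
  obtain ⟨ix, hix⟩ := hxC
  obtain ⟨iy, hiy⟩ := hyC
  have hbx : c ⟨x, hx⟩ ∈ badF ix := by
    simp only [hbadF, Finset.mem_filter, Finset.mem_univ, true_and]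
    exact ⟨⟨x, hx⟩, hix.symm, rfl⟩
  have hby : c ⟨y, hy⟩ ∈ badF iy := by
    simp only [hbadF, Finset.mem_filter, Finset.mem_univ, true_and]
    exact ⟨⟨y, hy⟩, hiy.symm, rfl⟩
  have htx : c ⟨x, hx⟩ ∉ L ix := by simp [hLdef, hbx]
  have hty : c ⟨y, hy⟩ ∉ L iy := by simp [hLdef, hby]
  have hcxy : c ⟨x, hx⟩ ≠ c ⟨y, hy⟩ := hc ⟨x, hx⟩ ⟨y, hy⟩ hxy
  obtain ⟨i0, a, haL, ha2⟩ := exists_good_pair n hn L hLcard _ _ ix iy hcxy htx hty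
  obtain ⟨g, hgmem, hgne⟩ := cycle_list_coloring n hn L hLcard i0 a haL ha2
  set c' : V → Fin 3 := fun v => if h : v ∈ Set.range f then g h.choose else c ⟨v, h⟩
    with hc'def
  have hc'f : ∀ i, c' (f i) = g i := by
    intro i
    have h : f i ∈ Set.range f := ⟨i, rfl⟩
    simp only [hc'def, dif_pos h]
    congr 1
    exact hf h.choose_spec
  have hc'o : ∀ (v) (h : v ∉ Set.range f), c' v = c ⟨v, h⟩ := by
    intro v h
    simp only [hc'def, dif_neg h]
  have hgnotbad : ∀ i t, t ∈ badF i → g i ≠ t := by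
    intro i t htb h
    have hm := hgmem i
    rw [h] at hm
    simp [hLdef, htb] at hm
  refine ⟨c', ?_, ?_⟩
  · intro u v huv
    by_cases hu : u ∈ Set.range f <;> by_cases hv : v ∈ Set.range f
    · obtain ⟨i, rfl⟩ := hu
      obtain ⟨j, rfl⟩ := hv
      rw [hc'f, hc'f]
      rcases (hcyc i j).mp huv with rfl | rfl
      · exact (hgne i).symm
      · have h := hgne (i - 1)
        rwa [sub_add_cancel] at h
    · obtain ⟨i, rfl⟩ := hu
      rw [hc'f, hc'o v hv]
      apply hgnotbad i
      simp only [hbadF, Finset.mem_filter, Finset.mem_univ, true_and]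
      exact ⟨⟨v, hv⟩, huv, rfl⟩
    · obtain ⟨j, rfl⟩ := hv
      rw [hc'f, hc'o u hu]
      have h := hgnotbad j (c ⟨u, hu⟩) (by
        simp only [hbadF, Finset.mem_filter, Finset.mem_univ, true_and]
        exact ⟨⟨u, hu⟩, huv.symm, rfl⟩)
      exact h.symm
    · rw [hc'o u hu, hc'o v hv]
      exact hc ⟨u, hu⟩ ⟨v, hv⟩ huv
  · intro u
    have hu : (u : V) ∉ Set.range f := u.prop
    rw [hc'o u hu]
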